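/- Let I be an ideal on ω. The following are equivalent: (i) there is no bijection f : ω → ω³ with f⁻¹[A] ∈ I for all A ∈ BI; (ii) for every function f : ω → ω² there exists A ∉ I such that f[A] ∈ Fin⊗Fin and f restricted to A is either constant or finite-to-one. -/

import Mathlib

open Set

/-- The ideal `Fin ⊗ Fin` on `ω²`: sets all but finitely many of whose
vertical sections are finite. -/
def FinFin : Set (Set (ℕ × ℕ)) :=
  {A | {n : ℕ | ¬ ({m : ℕ | (n, m) ∈ A}).Finite}.Finite}

/-- The `i`-th section of a subset of `ω³`. -/
def BIsec (i : ℕ) (A : Set (ℕ × ℕ × ℕ)) : Set (ℕ × ℕ) := {p | (i, p) ∈ A}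

/-- The ideal `BI` on `ω³`. -/
def BI : Set (Set (ℕ × ℕ × ℕ)) :=
  {A | ∃ k : ℕ, (∀ i < k, BIsec i A ∈ FinFin) ∧ ∀ i ≥ k, (BIsec i A).Finite}

/-- `I` is an ideal on `X`: contains all finite sets, closed under subsets and
finite unions, and proper. -/
def IsIdeal {X : Type*} (I : Set (Set X)) : Prop :=
  (∀ A : Set X, A.Finite → A ∈ I) ∧
  (∀ A B : Set X, A ∈ I → B ⊆ A → B ∈ I) ∧
  (∀ A B : Set X, A ∈ I → B ∈ I → A ∪ B ∈ I) ∧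
  (Set.univ : Set X) ∉ I

open Function

private lemma finfin_subset {A B : Set (ℕ × ℕ)} (hB : B ∈ FinFin) (hAB : A ⊆ B) : A ∈ FinFin := by
  refine hB.subset fun n hn => ?_
  simp only [mem_setOf_eq] at hn ⊢
  exact fun h => hn (h.subset fun m hm => hAB hm)

private lemma finfin_of_sections {A : Set (ℕ × ℕ)} (h : ∀ n, {m | (n, m) ∈ A}.Finite) : A ∈ FinFin := by
  have : {n : ℕ | ¬ ({m : ℕ | (n, m) ∈ A}).Finite} = ∅ := by
    ext n; simp [h n]
  show {n : ℕ | ¬ ({m : ℕ | (n, m) ∈ A}).Finite}.Finite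
  rw [this]; exact finite_empty

private lemma sec_finite {A : Set (ℕ × ℕ)} (h : A.Finite) (n : ℕ) : {m | (n, m) ∈ A}.Finite := by
  have : {m | (n, m) ∈ A} = Prod.mk n ⁻¹' A := rfl
  rw [this]
  exact h.preimage fun a _ b _ hab => (Prod.ext_iff.1 hab).2

private lemma finfin_finite {A : Set (ℕ × ℕ)} (h : A.Finite) : A ∈ FinFin :=
  finfin_of_sections (sec_finite h)

private lemma finfin_strip (k : ℕ) : {p : ℕ × ℕ | p.1 < k} ∈ FinFin := by
  apply Set.Finite.subset (finite_Iio k)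
  intro n hn
  simp only [mem_setOf_eq] at hn
  by_contra hnk
  apply hn
  have h2 : {m : ℕ | n < k} = ∅ := by
    ext m; simpa using hnk
  rw [h2]; exact finite_empty

private lemma ideal_biUnion {I : Set (Set ℕ)} (hI : IsIdeal I) {α : Type*} {s : Set α}
    (hs : s.Finite) {t : α → Set ℕ} (ht : ∀ x ∈ s, t x ∈ I) : (⋃ x ∈ s, t x) ∈ I := by
  refine Set.Finite.induction_on (motive := fun s _ => (∀ x ∈ s, t x ∈ I) → (⋃ x ∈ s, t x) ∈ I) s hs
    (fun _ => by simpa using hI.1 ∅ finite_empty) ?_ ht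
  intro a s _ _ ih ht'
  rw [biUnion_insert]
  exact hI.2.2.1 _ _ (ht' a (mem_insert a s)) (ih fun x hx => ht' x (mem_insert_of_mem a hx))

private lemma fiber_mem {I : Set (Set ℕ)} (f : ℕ → ℕ × ℕ)
    (key : ∀ A : Set ℕ, f '' A ∈ FinFin →
      ((∃ c, ∀ n ∈ A, f n = c) ∨ ∀ p : ℕ × ℕ, (A ∩ f ⁻¹' {p}).Finite) → A ∈ I)
    (p : ℕ × ℕ) : f ⁻¹' {p} ∈ I :=
  key _ (finfin_subset (finfin_finite (finite_singleton p)) (image_preimage_subset f {p}))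
    (Or.inl ⟨p, fun _ hn => hn⟩)

private lemma exists_infinite_mem {I : Set (Set ℕ)} (f : ℕ → ℕ × ℕ)
    (key : ∀ A : Set ℕ, f '' A ∈ FinFin →
      ((∃ c, ∀ n ∈ A, f n = c) ∨ ∀ p : ℕ × ℕ, (A ∩ f ⁻¹' {p}).Finite) → A ∈ I) :
    ∃ Z : Set ℕ, Z ∈ I ∧ Z.Infinite := by
  classical
  by_cases hfib : ∃ p, (f ⁻¹' {p}).Infinite
  · obtain ⟨p, hp⟩ := hfib
    exact ⟨f ⁻¹' {p}, fiber_mem f key p, hp⟩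
  · push_neg at hfib
    have hfin : ∀ p, (f ⁻¹' {p}).Finite := fun p => hfib p
    have hrange : (range f).Infinite := by
      intro hfin'
      have hsub : (univ : Set ℕ) ⊆ ⋃ p ∈ range f, f ⁻¹' {p} := fun n _ =>
        mem_biUnion ⟨n, rfl⟩ rfl
      exact infinite_univ ((hfin'.biUnion fun p _ => hfin p).subset hsub)
    obtain ⟨T, hTsub, hTff, hTinf⟩ : ∃ T, T ⊆ range f ∧ T ∈ FinFin ∧ T.Infinite := by
      by_cases hcol : ∃ a, {b | (a, b) ∈ range f}.Infinite
      · obtain ⟨a, ha⟩ := hcol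
        refine ⟨{p | p ∈ range f ∧ p.1 = a}, fun p hp => hp.1, ?_, ?_⟩
        · apply Set.Finite.subset (finite_singleton a)
          intro n hn
          simp only [mem_setOf_eq] at hn
          by_contra hna
          apply hn
          have h2 : {m | (n, m) ∈ range f ∧ n = a} = ∅ := by
            ext m
            simp only [mem_setOf_eq, mem_empty_iff_false, iff_false, not_and]
            intro _
            simpa using hna
          rw [h2]; exact finite_empty
        · apply Set.Infinite.mono (s := (fun b => (a, b)) '' {b | (a, b) ∈ range f})
          · rintro _ ⟨b, hb, rfl⟩
            exact ⟨hb, rfl⟩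
          · exact ha.image fun b _ b' _ h => (Prod.ext_iff.1 h).2
      · push_neg at hcol
        exact ⟨range f, subset_rfl,
          finfin_of_sections fun a => hcol a, hrange⟩
    set s : ℕ × ℕ → ℕ := fun p => if h : p ∈ range f then h.choose else 0 with hs_def
    have hs : ∀ p ∈ range f, f (s p) = p := by
      intro p hp
      simp only [hs_def, dif_pos hp]
      exact hp.choose_spec
    refine ⟨s '' T, key _ ?_ (Or.inr ?_), ?_⟩
    · apply finfin_subset hTff
      rintro _ ⟨_, ⟨p, hpT, rfl⟩, rfl⟩
      rw [hs p (hTsub hpT)]; exact hpT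
    · intro p
      apply Set.Finite.subset (finite_singleton (s p))
      rintro n ⟨⟨q, hq, rfl⟩, hfp⟩
      have h1 : f (s q) = q := hs q (hTsub hq)
      have h2 : f (s q) = p := hfp
      rw [mem_singleton_iff, h1.symm.trans h2]
    · have hinj : InjOn s T := fun p hp q hq h => by
        rw [← hs p (hTsub hp), ← hs q (hTsub hq), h]
      exact hTinf.image hinj

private lemma finfin_of_sections' {A : Set (ℕ × ℕ)} (b : ℕ)
    (h : ∀ n ≠ b, {m | (n, m) ∈ A}.Finite) : A ∈ FinFin := by
  apply Set.Finite.subset (finite_singleton b)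
  intro n hn
  simp only [mem_setOf_eq] at hn
  by_contra hnb
  exact hn (h n (by simpa using hnb))

private lemma construct {I : Set (Set ℕ)} (hI : IsIdeal I) (f : ℕ → ℕ × ℕ)
    (key : ∀ A : Set ℕ, f '' A ∈ FinFin →
      ((∃ c, ∀ n ∈ A, f n = c) ∨ ∀ p : ℕ × ℕ, (A ∩ f ⁻¹' {p}).Finite) → A ∈ I) :
    ∃ g : ℕ → ℕ × ℕ × ℕ, Function.Bijective g ∧ ∀ B ∈ BI, g ⁻¹' B ∈ I := by
  classical
  obtain ⟨Z, hZI, hZinf⟩ := exists_infinite_mem f key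
  have hZinf' : {n | n ∈ Z}.Infinite := hZinf
  set e : (ℕ × ℕ) × ℕ ≃ ℕ := Denumerable.eqv ((ℕ × ℕ) × ℕ) with he_def
  set w : (ℕ × ℕ) × ℕ → ℕ := fun x => Nat.nth (· ∈ Z) (e x) with hw_def
  have hw_inj : Injective w := fun x y h => e.injective (Nat.nth_injective hZinf' h)
  have hw_mem : ∀ x, w x ∈ Z := fun x => Nat.nth_mem_of_infinite hZinf' _
  set f' : ℕ → ℕ × ℕ := fun n => if h : ∃ x, w x = n then h.choose.1 else f n with hf'_def
  have hf'w : ∀ x, f' (w x) = x.1 := by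
    intro x
    have h : ∃ y, w y = w x := ⟨x, rfl⟩
    simp only [hf'_def, dif_pos h]
    rw [hw_inj h.choose_spec]
  have hf'_eq : ∀ n, f' n ≠ f n → n ∈ Z := by
    intro n hn
    by_cases h : ∃ x, w x = n
    · obtain ⟨x, rfl⟩ := h; exact hw_mem x
    · exact absurd (by simp only [hf'_def, dif_neg h]) hn
  have hfib' : ∀ p : ℕ × ℕ, {n | f' n = p}.Infinite := by
    intro p
    apply Set.infinite_of_injective_forall_mem (f := fun j : ℕ => w (p, j))
    · exact fun i j h => (Prod.ext_iff.1 (hw_inj h)).2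
    · exact fun j => hf'w (p, j)
  set cnt : ℕ → ℕ := fun n => Nat.count (fun m => f' m = f' n) n with hcnt_def
  set g : ℕ → ℕ × ℕ × ℕ := fun n => ((f' n).1, (f' n).2, cnt n) with hg_def
  have hgmem : ∀ (n : ℕ) (B : Set (ℕ × ℕ × ℕ)),
      g n ∈ B ↔ ((f' n).1, (f' n).2, cnt n) ∈ B := fun n B => Iff.rfl
  have hg_inj : Injective g := by
    intro n m h
    have h1 : f' n = f' m := by
      have := congrArg Prod.fst h
      have h2 := congrArg (fun q : ℕ × ℕ × ℕ => q.2.1) h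
      exact Prod.ext this h2
    have h2 : cnt n = cnt m := congrArg (fun q : ℕ × ℕ × ℕ => q.2.2) h
    have hpred : (fun m' => f' m' = f' m) = (fun m' => f' m' = f' n) := by rw [h1]
    rcases lt_trichotomy n m with hlt | heq | hlt
    · exfalso
      have hc : cnt n < cnt m := by
        have := Nat.count_strict_mono (p := fun m' => f' m' = f' n) rfl hlt
        simpa only [hcnt_def, hpred] using this
      omega
    · exact heq
    · exfalso
      have hc : cnt m < cnt n := by
        have := Nat.count_strict_mono (p := fun m' => f' m' = f' n) h1.symm hlt
        simpa only [hcnt_def, hpred] using this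
      omega
  have hg_surj : Surjective g := by
    rintro ⟨a, b, c⟩
    have hp : {n | f' n = (a, b)}.Infinite := hfib' (a, b)
    set n := Nat.nth (fun m => f' m = (a, b)) c with hn_def
    have h1 : f' n = (a, b) := Nat.nth_mem_of_infinite hp c
    have h2 : cnt n = c := by
      have hpred : (fun m' => f' m' = f' n) = (fun m' => f' m' = (a, b)) := by rw [h1]
      simp only [hcnt_def, hpred]
      exact Nat.count_nth_of_infinite hp c
    refine ⟨n, ?_⟩
    simp only [hg_def, h1, h2]
  have Hfib : ∀ (p : ℕ × ℕ) (T : Set ℕ), T.Finite → {n | f' n = p ∧ cnt n ∈ T}.Finite := by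
    intro p T hT
    have hinj : InjOn cnt {n | f' n = p ∧ cnt n ∈ T} := by
      intro n hn m hm h
      apply hg_inj
      simp only [hg_def, hn.1, hm.1, h]
    apply Set.Finite.of_finite_image ?_ hinj
    apply hT.subset
    rintro _ ⟨n, hn, rfl⟩
    exact hn.2
  refine ⟨g, ⟨hg_inj, hg_surj⟩, ?_⟩
  rintro B ⟨k, hk1, hk2⟩
  set W : ℕ → Set ℕ := fun a => {b | ¬ {c | (a, b, c) ∈ B}.Finite} with hW_def
  have hW : ∀ a < k, (W a).Finite := fun a ha => hk1 a ha
  have hA_T : ∀ n ∈ g ⁻¹' B, cnt n ∈ {c | ((f' n).1, (f' n).2, c) ∈ B} := fun n hn => hn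
  set A1 := {n | n ∈ g ⁻¹' B ∧ f' n = f n ∧ (f n).1 < k ∧ (f n).2 ∉ W (f n).1} with hA1_def
  set A2 := {n | f' n = f n ∧ (f n).1 < k ∧ (f n).2 ∈ W (f n).1} with hA2_def
  set A3 := {n | n ∈ g ⁻¹' B ∧ f' n = f n ∧ k ≤ (f n).1} with hA3_def
  have hcover : g ⁻¹' B ⊆ Z ∪ (A1 ∪ A2 ∪ A3) := by
    intro n hn
    by_cases hfn : f' n = f n
    · right
      rcases lt_or_ge (f n).1 k with h | h
      · by_cases hb : (f n).2 ∈ W (f n).1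
        · exact Or.inl (Or.inr ⟨hfn, h, hb⟩)
        · exact Or.inl (Or.inl ⟨hn, hfn, h, hb⟩)
      · exact Or.inr ⟨hn, hfn, h⟩
    · exact Or.inl (hf'_eq n hfn)
  have hA1 : A1 ∈ I := by
    apply key
    · apply finfin_subset (finfin_strip k)
      rintro _ ⟨n, hn, rfl⟩
      exact hn.2.2.1
    · refine Or.inr fun p => ?_
      by_cases hp : p.1 < k ∧ p.2 ∉ W p.1
      · have hTfin : {c | (p.1, p.2, c) ∈ B}.Finite := not_not.1 hp.2
        apply (Hfib p _ hTfin).subset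
        rintro n ⟨hn, hfp⟩
        have hfp' : f n = p := hfp
        refine ⟨hn.2.1.trans hfp', ?_⟩
        have := hA_T n hn.1
        rwa [hn.2.1, hfp'] at this
      · apply Set.Finite.subset finite_empty
        rintro n ⟨hn, hfp⟩
        have hfp' : f n = p := hfp
        exact hp ⟨hfp' ▸ hn.2.2.1, hfp' ▸ hn.2.2.2⟩
  have hA2 : A2 ∈ I := by
    have hS : {p : ℕ × ℕ | p.1 < k ∧ p.2 ∈ W p.1}.Finite := by
      apply Set.Finite.subset
        (Set.Finite.biUnion (Set.finite_Iio k) fun a (ha : a < k) =>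
          (hW a ha).image fun b => ((a, b) : ℕ × ℕ))
      rintro ⟨a, b⟩ ⟨ha, hb⟩
      exact mem_biUnion ha ⟨b, hb, rfl⟩
    apply hI.2.1 _ _ (ideal_biUnion hI hS fun p _ => fiber_mem f key p)
    intro n hn
    have hfS : f n ∈ {p : ℕ × ℕ | p.1 < k ∧ p.2 ∈ W p.1} := ⟨hn.2.1, hn.2.2⟩
    exact mem_biUnion hfS rfl
  have hA3 : A3 ∈ I := by
    apply key
    · apply finfin_of_sections
      intro a
      rcases lt_or_ge a k with h | h
      · have hempty : {m | (a, m) ∈ f '' A3} = ∅ := by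
          ext b
          simp only [mem_setOf_eq, mem_empty_iff_false, iff_false]
          rintro ⟨n, hn, hfn⟩
          have h3 : k ≤ (f n).1 := hn.2.2
          rw [hfn] at h3
          simp only at h3
          omega
        rw [hempty]; exact finite_empty
      · apply ((hk2 a h).image Prod.fst).subset
        rintro b ⟨n, hn, hfn⟩
        have hmem : ((f' n).1, (f' n).2, cnt n) ∈ B := hn.1
        rw [hn.2.1, hfn] at hmem
        exact ⟨(b, cnt n), hmem, rfl⟩
    · refine Or.inr fun p => ?_
      rcases lt_or_ge p.1 k with h | h
      · apply Set.Finite.subset finite_empty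
        rintro n ⟨hn, hfp⟩
        have hfp' : f n = p := hfp
        have := hn.2.2
        rw [hfp'] at this
        omega
      · have hTfin : {c | (p.1, p.2, c) ∈ B}.Finite := by
          have : {c | (p.1, p.2, c) ∈ B} = (fun c => ((p.2, c) : ℕ × ℕ)) ⁻¹' (BIsec p.1 B) := rfl
          rw [this]
          exact (hk2 p.1 h).preimage fun a _ b _ hab => (Prod.ext_iff.1 hab).2
        apply (Hfib p _ hTfin).subset
        rintro n ⟨hn, hfp⟩
        have hfp' : f n = p := hfp
        refine ⟨hn.2.1.trans hfp', ?_⟩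
        have := hA_T n hn.1
        rwa [hn.2.1, hfp'] at this
  exact hI.2.1 _ _ (hI.2.2.1 _ _ hZI (hI.2.2.1 _ _ (hI.2.2.1 _ _ hA1 hA2) hA3)) hcover

theorem stmt_6 (I : Set (Set ℕ)) (hI : IsIdeal I) :
    (¬ ∃ f : ℕ → ℕ × ℕ × ℕ, Function.Bijective f ∧ ∀ A ∈ BI, f ⁻¹' A ∈ I) ↔
    (∀ f : ℕ → ℕ × ℕ, ∃ A : Set ℕ, A ∉ I ∧ f '' A ∈ FinFin ∧
      ((∃ c, ∀ n ∈ A, f n = c) ∨ ∀ p : ℕ × ℕ, (A ∩ f ⁻¹' {p}).Finite)) := by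
  classical
  constructor
  · intro h1 f
    by_contra hc
    push_neg at hc
    apply h1
    apply construct hI f
    intro A hFF hor
    by_contra hA
    have h3 := hc A hA hFF
    rcases hor with ⟨c, hcon⟩ | hf2o
    · obtain ⟨n, hnA, hne⟩ := h3.1 c
      exact hne (hcon n hnA)
    · obtain ⟨p, hp⟩ := h3.2
      exact hp (hf2o p)
  · rintro h2 ⟨g, hg, hpre⟩
    set f : ℕ → ℕ × ℕ := fun n => ((g n).1, (g n).2.1) with hf_def
    obtain ⟨A, hA, hFF, hor⟩ := h2 f
    apply hA
    rcases hor with ⟨⟨a, b⟩, hc⟩ | hf2o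
    · refine hI.2.1 _ _ (hpre {q : ℕ × ℕ × ℕ | q.1 = a ∧ q.2.1 = b} ?_) ?_
      · refine ⟨a + 1, ?_, ?_⟩
        · intro i _
          by_cases hia : i = a
          · apply finfin_of_sections' b
            intro n hn
            have h2 : {m : ℕ | (n, m) ∈ BIsec i {q : ℕ × ℕ × ℕ | q.1 = a ∧ q.2.1 = b}} = ∅ := by
              ext m
              simp only [BIsec, mem_setOf_eq, mem_empty_iff_false, iff_false, not_and]
              exact fun _ => hn
            rw [h2]; exact finite_empty
          · apply finfin_finite
            have h2 : BIsec i {q : ℕ × ℕ × ℕ | q.1 = a ∧ q.2.1 = b} = ∅ := by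
              ext q
              simp only [BIsec, mem_setOf_eq, mem_empty_iff_false, iff_false, not_and]
              intro h _
              exact hia h
            rw [h2]; exact finite_empty
        · intro i hi
          have h2 : BIsec i {q : ℕ × ℕ × ℕ | q.1 = a ∧ q.2.1 = b} = ∅ := by
            ext q
            simp only [BIsec, mem_setOf_eq, mem_empty_iff_false, iff_false, not_and]
            intro h
            omega
          rw [h2]; exact finite_empty
      · intro n hn
        have := hc n hn
        have h1 : (g n).1 = a := congrArg Prod.fst this
        have h2 : (g n).2.1 = b := congrArg Prod.snd this
        exact ⟨h1, h2⟩
    · refine hI.2.1 _ _ (hpre (g '' A) ?_) (subset_preimage_image g A)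
      have hWf : {a | ¬ {b | (a, b) ∈ f '' A}.Finite}.Finite := hFF
      obtain ⟨m, hm⟩ := hWf.bddAbove
      refine ⟨m + 1, ?_, ?_⟩
      · intro i _
        apply finfin_of_sections
        intro b
        apply ((hf2o (i, b)).image fun n => (g n).2.2).subset
        rintro c ⟨n, hnA, hgn⟩
        refine ⟨n, ⟨hnA, ?_⟩, ?_⟩
        · show f n = (i, b)
          rw [hf_def]
          simp only [hgn]
        · simp only [hgn]
      · intro i hi
        have hSi : {b | (i, b) ∈ f '' A}.Finite := by
          by_contra h
          have : i ≤ m := hm h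
          omega
        apply (Set.Finite.image (fun n => (g n).2)
          (hSi.biUnion fun b _ => hf2o (i, b))).subset
        rintro ⟨b, c⟩ ⟨n, hnA, hgn⟩
        have hfn : f n = (i, b) := by rw [hf_def]; simp only [hgn]
        refine ⟨n, ?_, by simp only [hgn]⟩
        apply mem_biUnion (show b ∈ {b | (i, b) ∈ f '' A} from ⟨n, hnA, hfn⟩)
        exact ⟨hnA, hfn⟩
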